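/- Let γ : S² → Matrix (Fin 2) (Fin 2) ℝ be even. For i = 1,2 let h_rr⁽ⁱ⁾, π_rr⁽ⁱ⁾ : S² → ℝ and h⁽ⁱ⁾, π⁽ⁱ⁾ : S² → Matrix (Fin 2) (Fin 2) ℝ be measurable with all pairwise products integrable, and define λ⁽ⁱ⁾ := (1/2) h_rr⁽ⁱ⁾, k⁽ⁱ⁾ := (1/2) h⁽ⁱ⁾ + λ⁽ⁱ⁾ γ, p⁽ⁱ⁾ := 2( π_rr⁽ⁱ⁾ − Σ_{A,B} γ_{AB} π⁽ⁱ⁾^{AB} ). Assume λ⁽ⁱ⁾ and π⁽ⁱ⁾ are even while p⁽ⁱ⁾ and k⁽ⁱ⁾ are odd. Then ∫_{S²} [ h_rr⁽¹⁾ π_rr⁽²⁾ + Σ_{A,B} h⁽¹⁾_{AB} π⁽²⁾^{AB} − h_rr⁽²⁾ π_rr⁽¹⁾ − Σ_{A,B} h⁽²⁾_{AB} π⁽¹⁾^{AB} ] dμ = 0. In other words, the Henneaux–Troessaert parity conditions remove the logarithmically divergent term of the ADM symplectic structure. -/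
import Mathlib


open MeasureTheory Metric

/-- The surface measure on the unit sphere `S² ⊆ ℝ³`. -/
noncomputable def sphereMeasure : Measure (sphere (0 : EuclideanSpace ℝ (Fin 3)) 1) :=
  (volume : Measure (EuclideanSpace ℝ (Fin 3))).toSphere

section Aux

open Set Pointwise

/-- The antipodal map preserves the sphere measure. -/
lemma sphereMeasure_neg :
    MeasurePreserving (fun n : sphere (0 : EuclideanSpace ℝ (Fin 3)) 1 => -n)
      sphereMeasure sphereMeasure := by
  have hcont : Continuous (fun n : sphere (0 : EuclideanSpace ℝ (Fin 3)) 1 => -n) :=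
    continuous_neg
  refine ⟨hcont.measurable, ?_⟩
  refine Measure.ext fun s hs => ?_
  rw [Measure.map_apply hcont.measurable hs]
  have hs' : MeasurableSet ((fun n : sphere (0 : EuclideanSpace ℝ (Fin 3)) 1 => -n) ⁻¹' s) :=
    hcont.measurable hs
  rw [sphereMeasure, Measure.toSphere_apply' _ hs', Measure.toSphere_apply' _ hs]
  congr 1
  have himg : ((↑) '' ((fun n : sphere (0 : EuclideanSpace ℝ (Fin 3)) 1 => -n) ⁻¹' s)
      : Set (EuclideanSpace ℝ (Fin 3))) = -((↑) '' s) := by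
    ext x
    simp only [Set.mem_image, Set.mem_preimage, Set.mem_neg]
    constructor
    · rintro ⟨v, hv, rfl⟩
      exact ⟨-v, hv, by simp⟩
    · rintro ⟨w, hw, hx⟩
      exact ⟨-w, by simpa using hw, by rw [coe_neg_sphere, hx, neg_neg]⟩
  rw [himg]
  have hsmul : (Ioo (0:ℝ) 1) • (-((↑) '' s) : Set (EuclideanSpace ℝ (Fin 3)))
      = -((Ioo (0:ℝ) 1) • ((↑) '' s)) := by
    ext x
    simp only [Set.mem_smul, Set.mem_neg]
    constructor
    · rintro ⟨r, hr, y, hy, rfl⟩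
      exact ⟨r, hr, -y, hy, by simp [smul_neg]⟩
    · rintro ⟨r, hr, z, hz, hx⟩
      exact ⟨r, hr, -z, by simpa using hz, by rw [smul_neg, hx, neg_neg]⟩
  rw [hsmul, Measure.measure_neg]

/-- The integral of an odd integrable function over the sphere vanishes. -/
lemma integral_odd_sphere {f : sphere (0 : EuclideanSpace ℝ (Fin 3)) 1 → ℝ}
    (hf : Integrable f sphereMeasure) (hodd : ∀ n, f (-n) = -f n) :
    ∫ n, f n ∂sphereMeasure = 0 := by
  have h1 : ∫ n, f n ∂sphereMeasure = ∫ n, f (-n) ∂sphereMeasure := by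
    conv_lhs => rw [← sphereMeasure_neg.map_eq]
    exact integral_map sphereMeasure_neg.measurable.aemeasurable
      (by rw [sphereMeasure_neg.map_eq]; exact hf.1)
  simp only [hodd, integral_neg] at h1
  linarith

end Aux

/-- The Henneaux–Troessaert parity conditions (`λ⁽ⁱ⁾`, `π⁽ⁱ⁾` even; `p⁽ⁱ⁾`, `k⁽ⁱ⁾` odd,
where `λ⁽ⁱ⁾ := (1/2)h_rr⁽ⁱ⁾`, `k⁽ⁱ⁾ := (1/2)h⁽ⁱ⁾ + λ⁽ⁱ⁾γ`,
`p⁽ⁱ⁾ := 2(π_rr⁽ⁱ⁾ − Σ γ_{AB} π⁽ⁱ⁾^{AB})`) remove the logarithmically divergent term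
of the ADM symplectic structure. -/
theorem adm_log_divergence_vanishes_HT
    (γ : sphere (0 : EuclideanSpace ℝ (Fin 3)) 1 → Matrix (Fin 2) (Fin 2) ℝ)
    (hγeven : ∀ n, γ (-n) = γ n)
    (hrr πrr : Fin 2 → sphere (0 : EuclideanSpace ℝ (Fin 3)) 1 → ℝ)
    (h π' : Fin 2 → sphere (0 : EuclideanSpace ℝ (Fin 3)) 1 → Matrix (Fin 2) (Fin 2) ℝ)
    (lam p : Fin 2 → sphere (0 : EuclideanSpace ℝ (Fin 3)) 1 → ℝ)
    (k : Fin 2 → sphere (0 : EuclideanSpace ℝ (Fin 3)) 1 → Matrix (Fin 2) (Fin 2) ℝ)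
    (hmeas_hrr : ∀ i, Measurable (hrr i))
    (hmeas_πrr : ∀ i, Measurable (πrr i))
    (hmeas_h : ∀ i (A B : Fin 2), Measurable (fun n => h i n A B))
    (hmeas_π : ∀ i (A B : Fin 2), Measurable (fun n => π' i n A B))
    (hint_scal : ∀ i j : Fin 2, Integrable (fun n => hrr i n * πrr j n) sphereMeasure)
    (hint_ang : ∀ (i j : Fin 2) (A B : Fin 2),
      Integrable (fun n => h i n A B * π' j n A B) sphereMeasure)
    (hlam : ∀ i n, lam i n = (1 / 2 : ℝ) * hrr i n)
    (hk : ∀ i n, k i n = (1 / 2 : ℝ) • h i n + lam i n • γ n)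
    (hp : ∀ i n, p i n = 2 * (πrr i n - ∑ A : Fin 2, ∑ B : Fin 2, γ n A B * π' i n A B))
    (hlam_even : ∀ i n, lam i (-n) = lam i n)
    (hπ_even : ∀ i n, π' i (-n) = π' i n)
    (hp_odd : ∀ i n, p i (-n) = - p i n)
    (hk_odd : ∀ i n, k i (-n) = - k i n) :
    ∫ n, (hrr 0 n * πrr 1 n + (∑ A : Fin 2, ∑ B : Fin 2, h 0 n A B * π' 1 n A B)
      - hrr 1 n * πrr 0 n - (∑ A : Fin 2, ∑ B : Fin 2, h 1 n A B * π' 0 n A B))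
      ∂sphereMeasure = 0 := by
  have hint : Integrable (fun n => hrr 0 n * πrr 1 n
      + (∑ A : Fin 2, ∑ B : Fin 2, h 0 n A B * π' 1 n A B)
      - hrr 1 n * πrr 0 n - (∑ A : Fin 2, ∑ B : Fin 2, h 1 n A B * π' 0 n A B))
      sphereMeasure := by
    refine Integrable.sub (Integrable.sub (Integrable.add (hint_scal 0 1) ?_) (hint_scal 1 0)) ?_
    · exact integrable_finset_sum _ fun A _ => integrable_finset_sum _ fun B _ => hint_ang 0 1 A B
    · exact integrable_finset_sum _ fun A _ => integrable_finset_sum _ fun B _ => hint_ang 1 0 A B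
  refine integral_odd_sphere hint fun n => ?_
  have eγ : ∀ A B, γ (-n) A B = γ n A B := fun A B => by rw [hγeven]
  have eπ : ∀ (i : Fin 2) (A B : Fin 2), π' i (-n) A B = π' i n A B := fun i A B => by
    rw [hπ_even]
  have e1 : ∀ i : Fin 2, hrr i (-n) = hrr i n := by
    intro i
    have a := hlam i n
    have b := hlam i (-n)
    have c := hlam_even i n
    rw [b, a] at c
    linarith
  have e2 : ∀ (i : Fin 2) (A B : Fin 2),
      h i (-n) A B = -h i n A B - 2 * hrr i n * γ n A B := by
    intro i A B
    have a := congrFun (congrFun (hk i n) A) B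
    have b := congrFun (congrFun (hk i (-n)) A) B
    have c := congrFun (congrFun (hk_odd i n) A) B
    simp only [Matrix.add_apply, Matrix.smul_apply, smul_eq_mul, Matrix.neg_apply,
      eγ, hlam_even] at a b c
    have d := hlam i n
    linear_combination (-2 : ℝ) * b - 2 * a + 2 * c - 4 * γ n A B * d
  have e3 : ∀ i : Fin 2, πrr i (-n) = -πrr i n +
      2 * (γ n 0 0 * π' i n 0 0 + γ n 0 1 * π' i n 0 1
        + γ n 1 0 * π' i n 1 0 + γ n 1 1 * π' i n 1 1) := by
    intro i
    have a := hp i n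
    have b := hp i (-n)
    have c := hp_odd i n
    simp only [Fin.sum_univ_two, eγ, eπ] at a b
    linarith
  simp only [Fin.sum_univ_two, e1, e2, e3, eπ]
  ring
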